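/- arXiv:2602.14998 — 2 statements merged into one kernel-verified Lean document; each statement's English description precedes it below -/
import Mathlib

section
/- Let (X, A) have joint distribution P_{X,A}, and conditional on A let X̃ be an independent fresh draw from the conditional distribution P_{X|A}. Let Q_A be a reference probability measure for A such that P_{A|X=x} is absolutely continuous with respect to Q_A for every x, and define the likelihood ratio L(a|x) = dP_{A|X=x}/dQ_A(a). Let X* be an independent copy of X (drawn from the marginal of X, independent of everything else), and define g(x, x*) = E_{A∼Q_A}[L(A|x) L(A|x*)]. Then for any measurable set F of pairs, P((X, X̃) ∈ F) ≤ 2 √( E_{X ⊥ X*}[ g(X, X*) · 1{(X, X*) ∈ F} ] ). -/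
open MeasureTheory ProbabilityTheory

/-- Change of measure: `(X,A)` has joint law `π ⊗ κ` where `π` is the prior on `X` and
`κ = P_{A|X}`; each `κ x` has density `L(·|x)` with respect to the reference measure
`Q`; `ρ = P_{X|A}` is the posterior kernel, i.e. a disintegration of the joint law given
`A`; and `X̃` is a fresh draw from the posterior given `A`. Then for any measurable set
`F` of pairs, `P((X, X̃) ∈ F) ≤ 2 √(E_{X ⟂ X*}[g(X,X*) 1{(X,X*) ∈ F}])`, where
`g(x,x*) = E_{A ∼ Q}[L(A|x) L(A|x*)]` and `X*` is an independent copy of `X`. -/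
theorem stmt_5 {𝒳 𝒜 : Type*} [MeasurableSpace 𝒳] [MeasurableSpace 𝒜]
    (π : Measure 𝒳) [IsProbabilityMeasure π]
    (κ : Kernel 𝒳 𝒜) [IsMarkovKernel κ]
    (Q : Measure 𝒜) [IsProbabilityMeasure Q]
    (L : 𝒜 → 𝒳 → ENNReal) (hL : Measurable (Function.uncurry L))
    (hdens : ∀ x, κ x = Q.withDensity fun a => L a x)
    (ρ : Kernel 𝒜 𝒳) [IsMarkovKernel ρ]
    (hpost : (π.compProd κ).map Prod.swap
        = ((π.compProd κ).map Prod.snd).compProd ρ)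
    (F : Set (𝒳 × 𝒳)) (hF : MeasurableSet F) :
    ∫⁻ q : 𝒳 × 𝒜, ρ q.2 {y | (q.1, y) ∈ F} ∂(π.compProd κ)
      ≤ 2 * (∫⁻ q in F, ∫⁻ a, L a q.1 * L a q.2 ∂Q ∂(π.prod π)) ^ (1 / 2 : ℝ) := by
  classical
  set m : Measure 𝒜 := (π.compProd κ).map Prod.snd with hm
  haveI hmprob : IsProbabilityMeasure m :=
    Measure.isProbabilityMeasure_map measurable_snd.aemeasurable
  -- section measurability helpers
  have hLsec : ∀ x, Measurable fun a => L a x := fun x =>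
    hL.comp (measurable_id.prodMk measurable_const)
  have hLsec' : ∀ a, Measurable fun x => L a x := fun a =>
    hL.comp (measurable_const.prodMk measurable_id)
  -- the function u (a, x) = ρ a {y | (x, y) ∈ F}
  set u : 𝒜 × 𝒳 → ENNReal := fun p => ρ p.1 {y | (p.2, y) ∈ F} with hu_def
  have hG : MeasurableSet {p : (𝒜 × 𝒳) × 𝒳 | (p.1.2, p.2) ∈ F} :=
    (measurable_fst.snd.prodMk measurable_snd) hF
  have hu : Measurable u := by
    have := Kernel.measurable_kernel_prodMk_left
      (κ := ρ.comap Prod.fst measurable_fst) hG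
    simpa [Kernel.comap_apply] using this
  have husec : ∀ a, Measurable fun x => u (a, x) := fun a =>
    hu.comp (measurable_const.prodMk measurable_id)
  -- indicator of F
  set ind : 𝒳 × 𝒳 → ENNReal := F.indicator 1 with hind_def
  have hind_m : Measurable ind := measurable_one.indicator hF
  -- the main functions
  set h : 𝒜 → ENNReal := fun a => ∫⁻ x, L a x ∂π with hh_def
  have hh_m : Measurable h := hL.lintegral_prod_right'
  set t : 𝒜 → ENNReal := fun a => ∫⁻ x, u (a, x) ∂(ρ a) with ht_def
  have ht_m : Measurable t := Measurable.lintegral_kernel_prod_right' hu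
  set s : 𝒜 → ENNReal := fun a => ∫⁻ x, L a x * u (a, x) ∂π with hs_def
  have hs_m : Measurable s := (hL.mul hu).lintegral_prod_right'
  set V : 𝒜 × 𝒳 → ENNReal := fun p => ∫⁻ x, L p.1 x * ind (x, p.2) ∂π with hV_def
  have hV : Measurable V :=
    Measurable.lintegral_prod_right'
      ((hL.comp (measurable_fst.fst.prodMk measurable_snd)).mul
        (hind_m.comp (measurable_snd.prodMk measurable_fst.snd)))
  have hVsec : ∀ a, Measurable fun y => V (a, y) := fun a =>
    hV.comp (measurable_const.prodMk measurable_id)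
  set s' : 𝒜 → ENNReal := fun a => ∫⁻ y, V (a, y) ∂(ρ a) with hs'_def
  have hs'_m : Measurable s' := Measurable.lintegral_kernel_prod_right' hV
  set w : 𝒜 → ENNReal := fun a => ∫⁻ y, L a y * V (a, y) ∂π with hw_def
  have hw_m : Measurable w := (hL.mul hV).lintegral_prod_right'
  -- the key transfer identity
  have key : ∀ f : 𝒜 × 𝒳 → ENNReal, Measurable f →
      ∫⁻ a, ∫⁻ x, f (a, x) ∂(ρ a) ∂m = ∫⁻ a, ∫⁻ x, L a x * f (a, x) ∂π ∂Q := by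
    intro f hf
    have hfsec : ∀ x, Measurable fun a => f (a, x) := fun x =>
      hf.comp (measurable_id.prodMk measurable_const)
    rw [← Measure.lintegral_compProd hf, ← hpost, lintegral_map hf measurable_swap,
      Measure.lintegral_compProd (f := fun q : 𝒳 × 𝒜 => f q.swap) (hf.comp measurable_swap)]
    have e : ∀ x, ∫⁻ a, f (Prod.swap (x, a)) ∂(κ x) = ∫⁻ a, L a x * f (a, x) ∂Q := by
      intro x
      simp only [Prod.swap_prod_mk]
      rw [hdens x, lintegral_withDensity_eq_lintegral_mul Q (hLsec x) (hfsec x)]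
      rfl
    calc ∫⁻ x, ∫⁻ a, f (Prod.swap (x, a)) ∂(κ x) ∂π
        = ∫⁻ x, ∫⁻ a, L a x * f (a, x) ∂Q ∂π := lintegral_congr e
      _ = ∫⁻ a, ∫⁻ x, L a x * f (a, x) ∂π ∂Q := by
          refine lintegral_lintegral_swap ?_
          exact ((hL.comp measurable_swap).mul (hf.comp measurable_swap)).aemeasurable
  -- transfer for functions of a only
  have key0 : ∀ g : 𝒜 → ENNReal, Measurable g →
      ∫⁻ a, g a ∂m = ∫⁻ a, h a * g a ∂Q := by
    intro g hg
    have := key (fun p => g p.1) (hg.comp measurable_fst)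
    have e1 : ∫⁻ a, ∫⁻ _x, g a ∂(ρ a) ∂m = ∫⁻ a, g a ∂m := by
      refine lintegral_congr fun a => ?_
      simp [lintegral_const]
    have e2 : ∀ a, ∫⁻ x, L a x * g a ∂π = h a * g a := by
      intro a
      rw [lintegral_mul_const (g a) (hLsec' a)]
    rw [e1] at this
    rw [this]
    exact lintegral_congr e2
  -- indicator helper
  have hind_int : ∀ (ψ : 𝒜 → ENNReal) (A : Set 𝒜), MeasurableSet A →
      ∫⁻ a, A.indicator (1 : 𝒜 → ENNReal) a * ψ a ∂Q = ∫⁻ a in A, ψ a ∂Q := by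
    intro ψ A hA
    rw [← lintegral_indicator hA]
    refine lintegral_congr fun a => ?_
    by_cases ha : a ∈ A <;> simp [ha]
  -- first a.e. identity : h * t = s
  have I : (fun a => h a * t a) =ᵐ[Q] s := by
    refine ae_eq_of_forall_setLIntegral_eq_of_sigmaFinite (hh_m.mul ht_m) hs_m
      fun A hA _ => ?_
    set φ : 𝒜 → ENNReal := A.indicator 1 with hφ_def
    have hφ : Measurable φ := measurable_one.indicator hA
    have hk := key (fun p => φ p.1 * u p) ((hφ.comp measurable_fst).mul hu)
    have e1 : ∫⁻ a, ∫⁻ x, φ a * u (a, x) ∂(ρ a) ∂m = ∫⁻ a, φ a * t a ∂m := by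
      refine lintegral_congr fun a => ?_
      rw [lintegral_const_mul (φ a) (husec a)]
    have e2 : ∀ a, ∫⁻ x, L a x * (φ a * u (a, x)) ∂π = φ a * s a := by
      intro a
      rw [hs_def]
      rw [← lintegral_const_mul (φ a) (f := fun x => L a x * u (a, x)) ((hLsec' a).mul (husec a))]
      refine lintegral_congr fun x => ?_
      ring
    rw [e1, key0 (fun a => φ a * t a) (hφ.mul ht_m)] at hk
    have e3 : ∫⁻ a, h a * (φ a * t a) ∂Q = ∫⁻ a, φ a * (h a * t a) ∂Q := by
      refine lintegral_congr fun a => ?_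
      ring
    rw [e3, lintegral_congr e2] at hk
    rw [← hind_int (fun a => h a * t a) A hA, ← hind_int s A hA]
    exact hk
  -- second a.e. identity : h * s' = w
  have II : (fun a => h a * s' a) =ᵐ[Q] w := by
    refine ae_eq_of_forall_setLIntegral_eq_of_sigmaFinite (hh_m.mul hs'_m) hw_m
      fun A hA _ => ?_
    set φ : 𝒜 → ENNReal := A.indicator 1 with hφ_def
    have hφ : Measurable φ := measurable_one.indicator hA
    have hk := key (fun p => φ p.1 * V p) ((hφ.comp measurable_fst).mul hV)
    have e1 : ∫⁻ a, ∫⁻ x, φ a * V (a, x) ∂(ρ a) ∂m = ∫⁻ a, φ a * s' a ∂m := by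
      refine lintegral_congr fun a => ?_
      rw [lintegral_const_mul (φ a) (hVsec a)]
    have e2 : ∀ a, ∫⁻ x, L a x * (φ a * V (a, x)) ∂π = φ a * w a := by
      intro a
      rw [hw_def]
      rw [← lintegral_const_mul (φ a) (f := fun y => L a y * V (a, y)) ((hLsec' a).mul (hVsec a))]
      refine lintegral_congr fun x => ?_
      ring
    rw [e1, key0 (fun a => φ a * s' a) (hφ.mul hs'_m)] at hk
    have e3 : ∫⁻ a, h a * (φ a * s' a) ∂Q = ∫⁻ a, φ a * (h a * s' a) ∂Q := by
      refine lintegral_congr fun a => ?_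
      ring
    rw [e3, lintegral_congr e2] at hk
    rw [← hind_int (fun a => h a * s' a) A hA, ← hind_int w A hA]
    exact hk
  -- s = s' pointwise (Tonelli)
  have hss' : ∀ a, s a = s' a := by
    intro a
    have e1 : ∀ x, u (a, x) = ∫⁻ y, ind (x, y) ∂(ρ a) := by
      intro x
      have hset : (fun y => ind (x, y)) = (Prod.mk x ⁻¹' F).indicator (1 : 𝒳 → ENNReal) := by
        ext y
        by_cases hy : (x, y) ∈ F <;> simp [hind_def, hy, Set.indicator]
      rw [hset, lintegral_indicator_one (measurable_prodMk_left hF)]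
      rfl
    calc s a = ∫⁻ x, ∫⁻ y, L a x * ind (x, y) ∂(ρ a) ∂π := by
          refine lintegral_congr fun x => ?_
          rw [e1 x]
          exact (lintegral_const_mul (L a x)
            (hind_m.comp (measurable_const.prodMk measurable_id))).symm
      _ = ∫⁻ y, ∫⁻ x, L a x * ind (x, y) ∂π ∂(ρ a) := by
          refine lintegral_lintegral_swap ?_
          exact (((hLsec' a).comp measurable_fst).mul hind_m).aemeasurable
      _ = s' a := rfl
  -- combine: a.e. s * s ≤ w
  have III : ∀ᵐ a ∂Q, s a * s a ≤ w a := by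
    filter_upwards [I, II] with a hI hII
    have ht1 : t a ≤ 1 := by
      calc t a ≤ ∫⁻ _x, 1 ∂(ρ a) := lintegral_mono fun x => prob_le_one
        _ = 1 := by simp
    calc s a * s a = (h a * t a) * s a := by rw [hI]
      _ = t a * (h a * s a) := by ring
      _ = t a * (h a * s' a) := by rw [hss' a]
      _ = t a * w a := by rw [hII]
      _ ≤ 1 * w a := mul_le_mul_left ht1 _
      _ = w a := one_mul _
  -- identify the LHS
  have hLT : ∫⁻ q : 𝒳 × 𝒜, ρ q.2 {y | (q.1, y) ∈ F} ∂(π.compProd κ) = ∫⁻ a, s a ∂Q := by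
    have e0 : ∫⁻ q : 𝒳 × 𝒜, ρ q.2 {y | (q.1, y) ∈ F} ∂(π.compProd κ)
        = ∫⁻ p, u p ∂((π.compProd κ).map Prod.swap) := by
      rw [lintegral_map hu measurable_swap]
      rfl
    rw [e0, hpost, Measure.lintegral_compProd hu]
    exact key u hu
  -- identify the RHS integral
  have hwR : ∫⁻ a, w a ∂Q
      = ∫⁻ q in F, ∫⁻ a, L a q.1 * L a q.2 ∂Q ∂(π.prod π) := by
    rw [← lintegral_indicator hF]
    have e1 : ∀ q : 𝒳 × 𝒳, F.indicator (fun q => ∫⁻ a, L a q.1 * L a q.2 ∂Q) q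
        = ∫⁻ a, ind q * (L a q.1 * L a q.2) ∂Q := by
      intro q
      by_cases hq : q ∈ F
      · simp [hind_def, Set.indicator_of_mem hq]
      · simp [hind_def, Set.indicator_of_notMem hq]
    rw [lintegral_congr e1]
    have e2 : ∫⁻ q, ∫⁻ a, ind q * (L a q.1 * L a q.2) ∂Q ∂(π.prod π)
        = ∫⁻ a, ∫⁻ q, ind q * (L a q.1 * L a q.2) ∂(π.prod π) ∂Q := by
      refine lintegral_lintegral_swap ?_
      exact ((hind_m.comp measurable_fst).mul
        ((hL.comp (measurable_snd.prodMk measurable_fst.fst)).mul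
          (hL.comp (measurable_snd.prodMk measurable_fst.snd)))).aemeasurable
    rw [e2]
    refine lintegral_congr fun a => ?_
    have e3 : ∫⁻ q, ind q * (L a q.1 * L a q.2) ∂(π.prod π)
        = ∫⁻ x, ∫⁻ y, ind (x, y) * (L a x * L a y) ∂π ∂π := by
      refine lintegral_prod _ ?_
      exact (hind_m.mul (((hLsec' a).comp measurable_fst).mul
        ((hLsec' a).comp measurable_snd))).aemeasurable
    rw [e3]
    calc w a = ∫⁻ y, ∫⁻ x, L a y * (L a x * ind (x, y)) ∂π ∂π := by
          refine lintegral_congr fun y => ?_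
          exact (lintegral_const_mul (L a y)
            ((hLsec' a).mul (hind_m.comp (measurable_id.prodMk measurable_const)))).symm
      _ = ∫⁻ x, ∫⁻ y, L a y * (L a x * ind (x, y)) ∂π ∂π := by
          refine (lintegral_lintegral_swap ?_).symm
          exact (((hLsec' a).comp measurable_snd).mul
            (((hLsec' a).comp measurable_fst).mul hind_m)).aemeasurable
      _ = ∫⁻ x, ∫⁻ y, ind (x, y) * (L a x * L a y) ∂π ∂π := by
          refine lintegral_congr fun x => lintegral_congr fun y => ?_
          ring
  -- final computation
  rw [hLT, ← hwR]
  have step1 : ∫⁻ a, s a ∂Q ≤ (∫⁻ a, w a ∂Q) ^ (1 / 2 : ℝ) := by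
    have hs_le : ∀ᵐ a ∂Q, s a ≤ (w a) ^ (1 / 2 : ℝ) := by
      filter_upwards [III] with a ha
      have e : s a = (s a * s a) ^ (1 / 2 : ℝ) := by
        rw [← pow_two, ← ENNReal.rpow_natCast (s a) 2, ← ENNReal.rpow_mul]
        norm_num
      rw [e]
      exact ENNReal.rpow_le_rpow ha (by norm_num)
    have hpq : (2 : ℝ).HolderConjugate 2 :=
      (Real.holderConjugate_iff_eq_conjExponent one_lt_two).2 (by norm_num)
    calc ∫⁻ a, s a ∂Q ≤ ∫⁻ a, (w a) ^ (1 / 2 : ℝ) ∂Q := lintegral_mono_ae hs_le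
      _ ≤ (∫⁻ a, w a ∂Q) ^ (1 / 2 : ℝ) := by
          have hH := ENNReal.lintegral_mul_le_Lp_mul_Lq Q hpq
            (f := fun a => (w a) ^ (1 / 2 : ℝ)) (g := fun _ => (1 : ENNReal))
            (hw_m.pow_const _).aemeasurable aemeasurable_const
          have e : ∀ a, ((w a) ^ (1 / 2 : ℝ)) ^ (2 : ℝ) = w a := by
            intro a
            rw [← ENNReal.rpow_mul]
            norm_num
          simp only [Pi.mul_apply, mul_one, ENNReal.one_rpow, lintegral_one,
            measure_univ] at hH
          rwa [lintegral_congr e] at hH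
  refine le_trans step1 ?_
  exact le_mul_of_one_le_left zero_le one_le_two
end

section
/- Fix nonnegative integers ℓ_1, …, ℓ_k with even sum. Then Σ over all families (ℓ_{ij})_{1≤i<j≤k} of nonnegative integers satisfying ℓ_i = Σ_{j≠i} ℓ_{ij} for every i, of the quantity (∏_{i=1}^k ℓ_i!) / (∏_{i<j} ℓ_{ij}!), is at most (Σ_{i=1}^k ℓ_i − 1)!!. -/
open Finset

namespace Stmt7

variable {k : ℕ}

noncomputable def term (ℓ : Fin k → ℕ) (L : Fin k → Fin k → ℕ) : ℚ :=
  (∏ i, (Nat.factorial (ℓ i) : ℚ))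
    / ∏ p ∈ Finset.univ.filter (fun p : Fin k × Fin k => p.1 < p.2),
        (Nat.factorial (L p.1 p.2) : ℚ)

def Cond (ℓ : Fin k → ℕ) (L : Fin k → Fin k → ℕ) : Prop :=
  (∀ i j, L i j = L j i) ∧ (∀ i, L i i = 0) ∧ ∀ i, ℓ i = ∑ j, L i j

def mset (ℓ : Fin k → ℕ) : Finset (Fin k → Fin k → ℕ) :=
  (Finset.Iic (fun _ _ => ∑ i, ℓ i : Fin k → Fin k → ℕ)).filter
      (fun L => (∀ i j, L i j = L j i) ∧ (∀ i, L i i = 0) ∧ ∀ i, ℓ i = ∑ j, L i j)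

noncomputable def S (ℓ : Fin k → ℕ) : ℚ := ∑ L ∈ mset ℓ, term ℓ L

lemma mem_mset {ℓ : Fin k → ℕ} {L : Fin k → Fin k → ℕ} : L ∈ mset ℓ ↔ Cond ℓ L := by
  simp only [mset, mem_filter, mem_Iic, Cond]
  constructor
  · exact fun h => h.2
  · intro h
    refine ⟨?_, h⟩
    simp only [Pi.le_def]
    intro a b
    calc L a b ≤ ∑ b', L a b' := Finset.single_le_sum (fun _ _ => Nat.zero_le _) (mem_univ b)
    _ = ℓ a := (h.2.2 a).symm
    _ ≤ ∑ m, ℓ m := Finset.single_le_sum (fun _ _ => Nat.zero_le _) (mem_univ a)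

variable {k : ℕ}

lemma prod_split {M : Type*} [CommMonoid M] (f : Fin k → M) {i j : Fin k} (hij : i ≠ j) :
    ∏ m, f m = f i * (f j * ∏ m ∈ (univ.erase i).erase j, f m) := by
  rw [← Finset.mul_prod_erase univ f (mem_univ i),
    ← Finset.mul_prod_erase (univ.erase i) f (mem_erase.mpr ⟨hij.symm, mem_univ j⟩)]

lemma sum_split (f : Fin k → ℕ) {i j : Fin k} (hij : i ≠ j) :
    ∑ m, f m = f i + (f j + ∑ m ∈ (univ.erase i).erase j, f m) :=
  prod_split (M := Multiplicative ℕ) f hij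

lemma sum_split1 (f : Fin k → ℕ) (i : Fin k) :
    ∑ m, f m = f i + ∑ m ∈ univ.erase i, f m :=
  (Finset.add_sum_erase univ f (mem_univ i)).symm

def dec (L : Fin k → Fin k → ℕ) (i j : Fin k) : Fin k → Fin k → ℕ :=
  fun a b => if (a = i ∧ b = j) ∨ (a = j ∧ b = i) then L a b - 1 else L a b

def inc (L : Fin k → Fin k → ℕ) (i j : Fin k) : Fin k → Fin k → ℕ :=
  fun a b => if (a = i ∧ b = j) ∨ (a = j ∧ b = i) then L a b + 1 else L a b

def decl (ℓ : Fin k → ℕ) (i j : Fin k) : Fin k → ℕ :=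
  fun a => if a = i ∨ a = j then ℓ a - 1 else ℓ a

lemma Cond.entry_le {ℓ : Fin k → ℕ} {L} (h : Cond ℓ L) (a b : Fin k) : L a b ≤ ℓ a := by
  rw [h.2.2 a]
  exact Finset.single_le_sum (fun _ _ => Nat.zero_le _) (mem_univ b)

lemma inc_dec {L : Fin k → Fin k → ℕ} {i j : Fin k} (hsym : ∀ a b, L a b = L b a)
    (h1 : 1 ≤ L i j) : inc (dec L i j) i j = L := by
  funext a b
  simp only [inc, dec]
  by_cases hc : (a = i ∧ b = j) ∨ (a = j ∧ b = i)
  · have : 1 ≤ L a b := by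
      rcases hc with ⟨ha, hb⟩ | ⟨ha, hb⟩
      · subst ha; subst hb; exact h1
      · subst ha; subst hb; rw [hsym]; exact h1
    simp [hc]; omega
  · simp [hc]

lemma dec_inc (L : Fin k → Fin k → ℕ) (i j : Fin k) : dec (inc L i j) i j = L := by
  funext a b
  simp only [inc, dec]
  by_cases hc : (a = i ∧ b = j) ∨ (a = j ∧ b = i) <;> simp [hc]

lemma row_sum_dec {L : Fin k → Fin k → ℕ} {i j : Fin k} (hij : i ≠ j) (h1 : 1 ≤ L i j) :
    ∑ b, dec L i j i b = (∑ b, L i b) - 1 := by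
  rw [sum_split1 (dec L i j i) j, sum_split1 (L i) j]
  have h2 : dec L i j i j = L i j - 1 := by simp [dec]
  have h3 : ∑ b ∈ univ.erase j, dec L i j i b = ∑ b ∈ univ.erase j, L i b := by
    refine Finset.sum_congr rfl fun b hb => ?_
    have hbj : b ≠ j := (mem_erase.mp hb).1
    simp only [dec]
    rw [if_neg]
    rintro (⟨-, hb'⟩ | ⟨hb', -⟩)
    · exact hbj hb'
    · exact hij hb'
  omega

lemma cond_dec {ℓ : Fin k → ℕ} {L} {i j : Fin k} (hij : i ≠ j) (h : Cond ℓ L)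
    (h1 : 1 ≤ L i j) : Cond (decl ℓ i j) (dec L i j) := by
  obtain ⟨hsym, hdiag, hrow⟩ := h
  have h1' : 1 ≤ L j i := by rw [hsym]; exact h1
  refine ⟨?_, ?_, ?_⟩
  · intro a b
    simp only [dec, hsym a b]
    exact if_congr (by tauto) rfl rfl
  · intro a
    simp only [dec]
    rw [if_neg, hdiag a]
    rintro (⟨rfl, rfl⟩ | ⟨rfl, rfl⟩) <;> exact hij rfl
  · intro a
    by_cases hai : a = i
    · rw [hai]
      have h4 := row_sum_dec hij h1
      have h5 := hrow i
      have h6 : L i j ≤ ∑ b, L i b :=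
        Finset.single_le_sum (fun _ _ => Nat.zero_le _) (mem_univ j)
      rw [show decl ℓ i j i = ℓ i - 1 from if_pos (Or.inl rfl)]
      omega
    by_cases haj : a = j
    · rw [haj]
      have hd : dec L i j = dec L j i := by
        funext a b; simp only [dec]; exact if_congr (by tauto) rfl rfl
      have h4 := row_sum_dec (L := L) hij.symm h1'
      have h5 := hrow j
      have h6 : L j i ≤ ∑ b, L j b :=
        Finset.single_le_sum (fun _ _ => Nat.zero_le _) (mem_univ i)
      rw [hd]
      rw [show decl ℓ i j j = ℓ j - 1 from if_pos (Or.inr rfl)]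
      omega
    · simp only [decl, if_neg (by tauto : ¬(a = i ∨ a = j))]
      rw [hrow a]
      refine Finset.sum_congr rfl fun b _ => ?_
      simp only [dec]
      rw [if_neg]
      rintro (⟨ha, -⟩ | ⟨ha, -⟩) <;> [exact hai ha; exact haj ha]

lemma cond_inc {ℓ : Fin k → ℕ} {L'} {i j : Fin k} (hij : i ≠ j) (hi : 1 ≤ ℓ i) (hj : 1 ≤ ℓ j)
    (h : Cond (decl ℓ i j) L') : Cond ℓ (inc L' i j) := by
  obtain ⟨hsym, hdiag, hrow⟩ := h
  refine ⟨?_, ?_, ?_⟩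
  · intro a b
    simp only [inc, hsym a b]
    exact if_congr (by tauto) rfl rfl
  · intro a
    simp only [inc]
    rw [if_neg, hdiag a]
    rintro (⟨rfl, rfl⟩ | ⟨rfl, rfl⟩) <;> exact hij rfl
  · intro a
    by_cases hai : a = i
    · rw [hai]
      have hs : ∑ b, inc L' i j i b = (∑ b, L' i b) + 1 := by
        rw [sum_split1 (inc L' i j i) j, sum_split1 (L' i) j]
        have h2 : inc L' i j i j = L' i j + 1 := by simp [inc]
        have h3 : ∑ b ∈ univ.erase j, inc L' i j i b = ∑ b ∈ univ.erase j, L' i b := by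
          refine Finset.sum_congr rfl fun b hb => ?_
          have hbj : b ≠ j := (mem_erase.mp hb).1
          simp only [inc]
          rw [if_neg]
          rintro (⟨-, hb'⟩ | ⟨hb', -⟩)
          · exact hbj hb'
          · exact hij hb'
        omega
      rw [hs, ← hrow i]
      rw [show decl ℓ i j i = ℓ i - 1 from if_pos (Or.inl rfl)]
      omega
    by_cases haj : a = j
    · rw [haj]
      have hd : inc L' i j = inc L' j i := by
        funext a b; simp only [inc]; exact if_congr (by tauto) rfl rfl
      have hs : ∑ b, inc L' j i j b = (∑ b, L' j b) + 1 := by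
        rw [sum_split1 (inc L' j i j) i, sum_split1 (L' j) i]
        have h2 : inc L' j i j i = L' j i + 1 := by simp [inc]
        have h3 : ∑ b ∈ univ.erase i, inc L' j i j b = ∑ b ∈ univ.erase i, L' j b := by
          refine Finset.sum_congr rfl fun b hb => ?_
          have hbi : b ≠ i := (mem_erase.mp hb).1
          simp only [inc]
          rw [if_neg]
          rintro (⟨-, hb'⟩ | ⟨hb', -⟩)
          · exact hbi hb'
          · exact hij.symm hb'
        omega
      rw [hd, hs, ← hrow j]
      rw [show decl ℓ i j j = ℓ j - 1 from if_pos (Or.inr rfl)]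
      omega
    · have hthis : ∑ b, inc L' i j a b = ∑ b, L' a b := by
        refine Finset.sum_congr rfl fun b _ => ?_
        simp only [inc]
        rw [if_neg]
        rintro (⟨ha, -⟩ | ⟨ha, -⟩) <;> [exact hai ha; exact haj ha]
      rw [hthis, ← hrow a]
      simp only [decl, if_neg (by tauto : ¬(a = i ∨ a = j))]


lemma prod_fact_decl {ℓ : Fin k → ℕ} {i j : Fin k} (hij : i ≠ j) (hi : 1 ≤ ℓ i)
    (hj : 1 ≤ ℓ j) :
    ∏ m, Nat.factorial (ℓ m) = ℓ i * ℓ j * ∏ m, Nat.factorial (decl ℓ i j m) := by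
  rw [prod_split (fun m => Nat.factorial (ℓ m)) hij,
    prod_split (fun m => Nat.factorial (decl ℓ i j m)) hij]
  have e1 : decl ℓ i j i = ℓ i - 1 := if_pos (Or.inl rfl)
  have e2 : decl ℓ i j j = ℓ j - 1 := if_pos (Or.inr rfl)
  have e3 : ∏ m ∈ (univ.erase i).erase j, Nat.factorial (decl ℓ i j m)
      = ∏ m ∈ (univ.erase i).erase j, Nat.factorial (ℓ m) := by
    refine Finset.prod_congr rfl fun m hm => ?_
    have h1 := (mem_erase.mp hm).1
    have h2 := (mem_erase.mp (mem_erase.mp hm).2).1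
    rw [show decl ℓ i j m = ℓ m from if_neg (by tauto)]
  rw [e1, e2, e3, ← Nat.mul_factorial_pred (Nat.one_le_iff_ne_zero.mp hi), ← Nat.mul_factorial_pred (Nat.one_le_iff_ne_zero.mp hj)]
  ring

def P : Finset (Fin k × Fin k) := Finset.univ.filter (fun p : Fin k × Fin k => p.1 < p.2)

lemma prod_fact_dec {L : Fin k → Fin k → ℕ} {i j : Fin k} (hij : i < j) (h1 : 1 ≤ L i j) :
    ∏ p ∈ P, Nat.factorial (L p.1 p.2)
      = L i j * ∏ p ∈ P, Nat.factorial (dec L i j p.1 p.2) := by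
  have hp0 : (i, j) ∈ (P : Finset (Fin k × Fin k)) := by
    simp [P, hij]
  rw [← Finset.mul_prod_erase P (fun p => Nat.factorial (L p.1 p.2)) hp0,
    ← Finset.mul_prod_erase P (fun p => Nat.factorial (dec L i j p.1 p.2)) hp0]
  have e1 : dec L i j i j = L i j - 1 := if_pos (Or.inl ⟨rfl, rfl⟩)
  have e3 : ∏ p ∈ P.erase (i, j), Nat.factorial (dec L i j p.1 p.2)
      = ∏ p ∈ P.erase (i, j), Nat.factorial (L p.1 p.2) := by
    refine Finset.prod_congr rfl fun p hp => ?_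
    have hne := (mem_erase.mp hp).1
    have hlt : p.1 < p.2 := by
      have := (mem_erase.mp hp).2
      simpa [P] using this
    rw [show dec L i j p.1 p.2 = L p.1 p.2 from if_neg ?_]
    rintro (⟨ha, hb⟩ | ⟨ha, hb⟩)
    · exact hne (Prod.ext ha hb)
    · rw [ha, hb] at hlt; exact absurd hij (not_lt.mpr hlt.le)
  rw [e1, e3, ← Nat.mul_factorial_pred (Nat.one_le_iff_ne_zero.mp h1)]
  ring

lemma dec_symm (L : Fin k → Fin k → ℕ) (i j : Fin k) : dec L i j = dec L j i := by
  funext a b; simp only [dec]; exact if_congr (by tauto) rfl rfl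

lemma decl_symm (ℓ : Fin k → ℕ) (i j : Fin k) : decl ℓ i j = decl ℓ j i := by
  funext a; simp only [decl]; exact if_congr (by tauto) rfl rfl

lemma term_dec_lt {ℓ : Fin k → ℕ} {L : Fin k → Fin k → ℕ} {i j : Fin k} (hij : i < j)
    (h : Cond ℓ L) (h1 : 1 ≤ L i j) :
    (ℓ i : ℚ) * ℓ j * term (decl ℓ i j) (dec L i j) = (L i j : ℚ) * term ℓ L := by
  have hi : 1 ≤ ℓ i := le_trans h1 (h.entry_le i j)
  have h1' : 1 ≤ L j i := by rw [h.1 j i]; exact h1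
  have hj : 1 ≤ ℓ j := le_trans h1' (h.entry_le j i)
  have hN := congrArg (fun n : ℕ => (n : ℚ)) (prod_fact_decl hij.ne hi hj)
  have hD := congrArg (fun n : ℕ => (n : ℚ)) (prod_fact_dec hij h1)
  push_cast at hN hD
  simp only [P] at hD
  simp only [term]
  rw [hN, hD]
  have hD' : (∏ p ∈ Finset.univ.filter (fun p : Fin k × Fin k => p.1 < p.2),
      (Nat.factorial (dec L i j p.1 p.2) : ℚ)) ≠ 0 := by
    refine ne_of_gt (Finset.prod_pos fun p _ => ?_)
    exact_mod_cast Nat.factorial_pos _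
  have hiq : (ℓ i : ℚ) ≠ 0 := by exact_mod_cast Nat.one_le_iff_ne_zero.mp hi
  have hjq : (ℓ j : ℚ) ≠ 0 := by exact_mod_cast Nat.one_le_iff_ne_zero.mp hj
  have hLq : (L i j : ℚ) ≠ 0 := by exact_mod_cast Nat.one_le_iff_ne_zero.mp h1
  field_simp

lemma term_dec {ℓ : Fin k → ℕ} {L : Fin k → Fin k → ℕ} {i j : Fin k} (hij : i ≠ j)
    (h : Cond ℓ L) (h1 : 1 ≤ L i j) :
    (ℓ i : ℚ) * ℓ j * term (decl ℓ i j) (dec L i j) = (L i j : ℚ) * term ℓ L := by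
  rcases hij.lt_or_gt with hlt | hlt
  · exact term_dec_lt hlt h h1
  · have h1' : 1 ≤ L j i := by rw [h.1 j i]; exact h1
    have := term_dec_lt hlt h h1'
    rw [dec_symm L i j, decl_symm ℓ i j, h.1 i j]
    rw [← this]
    ring


lemma sum_split1' {M : Type*} [AddCommMonoid M] (f : Fin k → M) (i : Fin k) :
    ∑ m, f m = f i + ∑ m ∈ univ.erase i, f m :=
  (Finset.add_sum_erase univ f (mem_univ i)).symm

lemma sum_dec_bij {ℓ : Fin k → ℕ} {i j : Fin k} (hij : i ≠ j) (hi : 1 ≤ ℓ i) (hj : 1 ≤ ℓ j) :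
    ∑ L ∈ (mset ℓ).filter (fun L => 1 ≤ L i j), term (decl ℓ i j) (dec L i j)
      = S (decl ℓ i j) := by
  rw [S]
  refine Finset.sum_nbij' (fun L => dec L i j) (fun L' => inc L' i j) ?_ ?_ ?_ ?_ ?_
  · intro L hL
    obtain ⟨hm, h1⟩ := mem_filter.mp hL
    exact mem_mset.mpr (cond_dec hij (mem_mset.mp hm) h1)
  · intro L' hL'
    have hc := cond_inc hij hi hj (mem_mset.mp hL')
    refine mem_filter.mpr ⟨mem_mset.mpr hc, ?_⟩
    simp [inc]
  · intro L hL
    obtain ⟨hm, h1⟩ := mem_filter.mp hL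
    exact inc_dec (mem_mset.mp hm).1 h1
  · intro L' _
    exact dec_inc L' i j
  · intro L _
    rfl

lemma S_rec {ℓ : Fin k → ℕ} {i : Fin k} (hi : 1 ≤ ℓ i) :
    S ℓ = ∑ j ∈ univ.erase i, (ℓ j : ℚ) * S (decl ℓ i j) := by
  have hiq : (ℓ i : ℚ) ≠ 0 := by exact_mod_cast Nat.one_le_iff_ne_zero.mp hi
  have step1 : S ℓ = ∑ j, ∑ L ∈ mset ℓ, (L i j : ℚ) / ℓ i * term ℓ L := by
    rw [S, Finset.sum_comm]
    refine Finset.sum_congr rfl fun L hL => ?_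
    have hc := mem_mset.mp hL
    rw [← Finset.sum_mul, ← Finset.sum_div]
    have hsum : ∑ j, (L i j : ℚ) = (ℓ i : ℚ) := by
      rw [hc.2.2 i]
      push_cast
      rfl
    rw [hsum, div_self hiq, one_mul]
  rw [step1, sum_split1' _ i]
  have hzero : ∑ L ∈ mset ℓ, (L i i : ℚ) / ℓ i * term ℓ L = 0 := by
    refine Finset.sum_eq_zero fun L hL => ?_
    rw [(mem_mset.mp hL).2.1 i]
    simp
  rw [hzero, zero_add]
  refine Finset.sum_congr rfl fun j hj => ?_
  have hij : i ≠ j := fun e => (mem_erase.mp hj).1 e.symm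
  by_cases hjz : ℓ j = 0
  · have hL0 : ∀ L ∈ mset ℓ, (L i j : ℚ) / ℓ i * term ℓ L = 0 := by
      intro L hL
      have hc := mem_mset.mp hL
      have hz : L i j = 0 := by
        have h1 : L j i ≤ ℓ j := hc.entry_le j i
        have h2 := hc.1 i j
        omega
      rw [hz]
      simp
    rw [Finset.sum_eq_zero hL0, hjz]
    simp
  · have hj1 : 1 ≤ ℓ j := Nat.one_le_iff_ne_zero.mpr hjz
    have e1 : ∑ L ∈ mset ℓ, (L i j : ℚ) / ℓ i * term ℓ L
        = ∑ L ∈ (mset ℓ).filter (fun L => 1 ≤ L i j), (L i j : ℚ) / ℓ i * term ℓ L := by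
      refine (Finset.sum_filter_of_ne fun L hL hne => ?_).symm
      by_contra h0
      have hz : L i j = 0 := by omega
      rw [hz] at hne
      simp at hne
    rw [e1, ← sum_dec_bij hij hi hj1, Finset.mul_sum]
    refine Finset.sum_congr rfl fun L hL => ?_
    obtain ⟨hm, h1⟩ := mem_filter.mp hL
    have hc := mem_mset.mp hm
    have key := term_dec hij hc h1
    rw [div_mul_eq_mul_div, eq_comm, eq_div_iff hiq]
    linear_combination key

lemma S_nonneg (ℓ : Fin k → ℕ) : 0 ≤ S ℓ :=
  Finset.sum_nonneg fun L _ => by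
    rw [term]
    positivity

lemma dfac_step {n : ℕ} (hn : 2 ≤ n) :
    Nat.doubleFactorial (n - 1) = (n - 1) * Nat.doubleFactorial (n - 2 - 1) := by
  rcases n with _ | _ | _ | m
  · omega
  · omega
  · rfl
  · show Nat.doubleFactorial (m + 2) = (m + 2) * Nat.doubleFactorial m
    rfl

lemma main : ∀ n : ℕ, ∀ {k : ℕ} (ℓ : Fin k → ℕ), ∑ i, ℓ i = n → Even n →
    S ℓ ≤ (Nat.doubleFactorial (n - 1) : ℚ) := by
  intro n
  induction n using Nat.strong_induction_on with
  | _ n IH =>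
    intro k ℓ hn he
    rcases Nat.eq_zero_or_pos n with rfl | hpos
    · have hz : ∀ m, ℓ m = 0 := fun m =>
        Finset.sum_eq_zero_iff.mp hn m (mem_univ m)
      have hset : mset ℓ = {fun _ _ => 0} := by
        ext L
        rw [mem_mset, Finset.mem_singleton]
        constructor
        · intro hc
          funext a b
          have h := hc.entry_le a b
          rw [hz a] at h
          omega
        · rintro rfl
          exact ⟨fun _ _ => rfl, fun _ => rfl, fun a => by simp [hz]⟩
      rw [S, hset, Finset.sum_singleton]
      have ht : term ℓ (fun _ _ => 0) = 1 := by
        simp [term, hz]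
      rw [ht]
      norm_num [Nat.doubleFactorial]
    · have h2 : 2 ≤ n := by
        rcases he with ⟨m, hm⟩
        omega
      have hex : ∃ i, 1 ≤ ℓ i := by
        by_contra hno
        push_neg at hno
        have hzz : ∑ i, ℓ i = 0 := Finset.sum_eq_zero fun i _ => by
          have := hno i
          omega
        omega
      obtain ⟨i, hi⟩ := hex
      rw [S_rec hi]
      have hb : (0:ℚ) ≤ (Nat.doubleFactorial (n - 2 - 1) : ℚ) := by positivity
      have hstep : ∀ j ∈ univ.erase i, (ℓ j : ℚ) * S (decl ℓ i j)
          ≤ (ℓ j : ℚ) * (Nat.doubleFactorial (n - 2 - 1) : ℚ) := by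
        intro j hj
        have hij : i ≠ j := fun e => (mem_erase.mp hj).1 e.symm
        by_cases hjz : ℓ j = 0
        · simp [hjz]
        · have hj1 : 1 ≤ ℓ j := Nat.one_le_iff_ne_zero.mpr hjz
          refine mul_le_mul_of_nonneg_left ?_ (by positivity)
          refine IH (n - 2) (by omega) (decl ℓ i j) ?_ ?_
          · have e1 : decl ℓ i j i = ℓ i - 1 := if_pos (Or.inl rfl)
            have e2 : decl ℓ i j j = ℓ j - 1 := if_pos (Or.inr rfl)
            have e3 : ∑ m ∈ (univ.erase i).erase j, decl ℓ i j m
                = ∑ m ∈ (univ.erase i).erase j, ℓ m := by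
              refine Finset.sum_congr rfl fun m hm => ?_
              have h1' := (mem_erase.mp hm).1
              have h2' := (mem_erase.mp (mem_erase.mp hm).2).1
              exact if_neg (by tauto)
            have g1 := sum_split (decl ℓ i j) hij
            have g2 := sum_split ℓ hij
            omega
          · rcases he with ⟨m, hm⟩
            exact ⟨m - 1, by omega⟩
      calc ∑ j ∈ univ.erase i, (ℓ j : ℚ) * S (decl ℓ i j)
          ≤ ∑ j ∈ univ.erase i, (ℓ j : ℚ) * (Nat.doubleFactorial (n - 2 - 1) : ℚ) :=
            Finset.sum_le_sum hstep
        _ = ((∑ j ∈ univ.erase i, ℓ j : ℕ) : ℚ) * (Nat.doubleFactorial (n - 2 - 1) : ℚ) := by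
            rw [← Finset.sum_mul]
            push_cast
            ring
        _ ≤ ((n - 1 : ℕ) : ℚ) * (Nat.doubleFactorial (n - 2 - 1) : ℚ) := by
            refine mul_le_mul_of_nonneg_right ?_ hb
            have hsum : ∑ j ∈ univ.erase i, ℓ j = n - ℓ i := by
              have := sum_split1 ℓ i
              omega
            rw [hsum]
            exact_mod_cast Nat.cast_le.mpr (show n - ℓ i ≤ n - 1 by omega)
        _ = (Nat.doubleFactorial (n - 1) : ℚ) := by
            rw [dfac_step h2, Nat.cast_mul]

end Stmt7


/-- For nonnegative integers `ℓ_1, …, ℓ_k` with even sum, the sum over all symmetric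
families `(L_{ij})_{i≠j}` of nonnegative integers (with zero diagonal) satisfying
`ℓ_i = Σ_{j≠i} L_{ij}` for every `i` of `(∏_i ℓ_i!)/(∏_{i<j} L_{ij}!)` is at most
`(Σ_i ℓ_i − 1)!!`. (Every such family satisfies `L i j ≤ Σ_i ℓ_i` entrywise, so the
sum may be taken over the finite set `Iic` of such bounded families.) -/
theorem stmt_7 (k : ℕ) (ℓ : Fin k → ℕ) (heven : Even (∑ i, ℓ i)) :
    ∑ L ∈ (Finset.Iic (fun _ _ => ∑ i, ℓ i : Fin k → Fin k → ℕ)).filter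
        (fun L => (∀ i j, L i j = L j i) ∧ (∀ i, L i i = 0) ∧ ∀ i, ℓ i = ∑ j, L i j),
        (∏ i, (Nat.factorial (ℓ i) : ℚ))
          / ∏ p ∈ Finset.univ.filter (fun p : Fin k × Fin k => p.1 < p.2),
              (Nat.factorial (L p.1 p.2) : ℚ)
      ≤ (Nat.doubleFactorial ((∑ i, ℓ i) - 1) : ℚ) := by
  exact Stmt7.main _ ℓ rfl heven
end
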